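/- Let d ∈ ℕ and let μ, ν be regular probability measures on ℝ^d. Suppose that for every test function f ∈ F_d, the product measure μ ⊗ ν assigns probability exactly 1/2 to the set {(θ, ϑ) ∈ ℝ^d × ℝ^d : f(θ) ≤ f(ϑ)} (i.e., for independent random variables θ ~ μ and ϑ ~ ν one has P(f(θ) ≤ f(ϑ)) = 1/2). Then μ = ν. -/

import Mathlib

open MeasureTheory Set

open ProbabilityTheory Function

/-- The open interval (a,b) in ℝ, with possibly infinite endpoints a, b ∈ EReal. -/
def erealIoo (a b : EReal) : Set ℝ := {x : ℝ | a < (x : EReal) ∧ (x : EReal) < b}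

/-- A measure on ℝ is regular on (a,b) if it is supported in (a,b) and equivalent to
the restriction of Lebesgue measure to (a,b). -/
def regularOn (γ : Measure ℝ) (a b : EReal) : Prop :=
  γ (erealIoo a b)ᶜ = 0 ∧
  γ ≪ volume.restrict (erealIoo a b) ∧
  volume.restrict (erealIoo a b) ≪ γ

/-- A measure on ℝ^d is regular if it is equivalent to Lebesgue measure. -/
def regular {d : ℕ} (ν : Measure (Fin d → ℝ)) : Prop :=
  ν ≪ volume ∧ volume ≪ ν

/-- The set of test functions F_d: measurable f : ℝ^d → ℝ with range in some open interval
(a,b), such that f_#ν is regular on (a,b) whenever ν is a regular probability measure. -/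
def testFun {d : ℕ} (f : (Fin d → ℝ) → ℝ) : Prop :=
  Measurable f ∧
  ∃ a b : EReal, a < b ∧ (∀ x, a < (f x : EReal) ∧ (f x : EReal) < b) ∧
    ∀ ν : Measure (Fin d → ℝ), IsProbabilityMeasure ν → regular ν →
      regularOn (ν.map f) a b

lemma cdf_cont (p : Measure ℝ) [IsProbabilityMeasure p] [NullSingletonClass p] :
    Continuous (cdf p) := by
  rw [continuous_iff_continuousAt]
  intro x
  rw [(cdf p).mono.continuousAt_iff_leftLim_eq_rightLim, (cdf p).rightLim_eq x]
  have h1 : (cdf p).measure {x} = p {x} := by rw [measure_cdf]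
  rw [(cdf p).measure_singleton, measure_singleton, ENNReal.ofReal_eq_zero] at h1
  have h2 := (cdf p).mono.leftLim_le (le_refl x)
  linarith

lemma map_cdf (p : Measure ℝ) [IsProbabilityMeasure p] [NullSingletonClass p] :
    p.map (cdf p) = volume.restrict (Ioc (0:ℝ) 1) := by
  have hF : Continuous (cdf p) := cdf_cont p
  have hFm : Measurable (cdf p) := (cdf p).mono.measurable
  haveI : IsFiniteMeasure (volume.restrict (Ioc (0:ℝ) 1)) :=
    ⟨by rw [Measure.restrict_apply_univ]; simp⟩
  refine Measure.ext_of_Iic (p.map (cdf p)) _ (fun t => ?_)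
  rw [Measure.map_apply hFm measurableSet_Iic, Measure.restrict_apply measurableSet_Iic]
  rcases lt_or_ge t 0 with ht | ht
  · have h1 : cdf p ⁻¹' Iic t = ∅ := by
      ext x; simp only [mem_preimage, mem_Iic, mem_empty_iff_false, iff_false, not_le]
      exact lt_of_lt_of_le ht (cdf_nonneg p x)
    have h2 : Iic t ∩ Ioc (0:ℝ) 1 = ∅ := by
      ext x; simp only [mem_inter_iff, mem_Iic, mem_Ioc, mem_empty_iff_false, iff_false]
      rintro ⟨hx, hx0, -⟩; linarith
    rw [h1, h2]; simp
  rcases le_or_gt 1 t with ht1 | ht1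
  · have h1 : cdf p ⁻¹' Iic t = univ := by
      ext x; simp only [mem_preimage, mem_Iic, mem_univ, iff_true]
      exact le_trans (cdf_le_one p x) ht1
    have h2 : Iic t ∩ Ioc (0:ℝ) 1 = Ioc 0 1 := by
      rw [inter_eq_right]; intro x hx; exact le_trans hx.2 ht1
    rw [h1, h2, measure_univ, Real.volume_Ioc]; norm_num
  · -- 0 ≤ t < 1
    have h2 : Iic t ∩ Ioc (0:ℝ) 1 = Ioc 0 t := by
      ext x; simp only [mem_inter_iff, mem_Iic, mem_Ioc]
      constructor
      · rintro ⟨hx, hx0, -⟩; exact ⟨hx0, hx⟩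
      · rintro ⟨hx0, hx⟩; exact ⟨hx, hx0, le_trans hx ht1.le⟩
    rw [h2, Real.volume_Ioc]
    set A := cdf p ⁻¹' Iic t with hA
    rcases eq_empty_or_nonempty A with hAe | hAne
    · have ht0 : t = 0 := by
        by_contra h0
        have htpos : 0 < t := lt_of_le_of_ne ht (Ne.symm h0)
        have := (tendsto_cdf_atBot p).eventually_lt_const htpos
        obtain ⟨x, hx⟩ := this.exists
        have hxA : x ∈ A := hx.le
        rw [hAe] at hxA
        exact hxA
      rw [hAe, ht0]; simp
    · -- A nonempty
      obtain ⟨x₀, hx₀⟩ := ((tendsto_cdf_atTop p).eventually_const_lt ht1).exists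
      have hbdd : BddAbove A := by
        refine ⟨x₀, fun x hx => ?_⟩
        by_contra hgt
        push_neg at hgt
        exact absurd (le_trans ((cdf p).mono hgt.le) hx) (not_le.mpr hx₀)
      have hclosed : IsClosed A := isClosed_Iic.preimage hF
      set s := sSup A with hs
      have hsA : s ∈ A := hclosed.csSup_mem hAne hbdd
      have hAIic : A = Iic s := by
        ext x
        constructor
        · intro hx; exact le_csSup hbdd hx
        · intro hx; exact le_trans ((cdf p).mono hx) hsA
      have hFs : cdf p s = t := by
        refine le_antisymm hsA ?_
        by_contra hlt
        push_neg at hlt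
        have := (hF.continuousAt (x := s)).eventually_lt_const hlt
        obtain ⟨ε, hε, hball⟩ := Metric.eventually_nhds_iff.mp this
        have hmem : (s + ε/2) ∈ A := by
          refine le_of_lt (hball (y := s + ε/2) ?_)
          rw [Real.dist_eq, show s + ε/2 - s = ε/2 by ring, abs_of_pos (by linarith)]
          linarith
        rw [hAIic] at hmem
        simp only [mem_Iic] at hmem
        linarith
      rw [hAIic]
      rw [← ofReal_cdf p s, hFs, sub_zero]

lemma lemA {d : ℕ} (hd : d ≠ 0) {T : Set (Fin d → ℝ)} (hT : MeasurableSet T)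
    (hT0 : volume T ≠ 0) :
    ∃ g : (Fin d → ℝ) → ℝ, Measurable g ∧ (∀ x, g x ∈ Ioo (0:ℝ) 1) ∧
      ∀ E : Set ℝ, MeasurableSet E →
        (volume (T ∩ g ⁻¹' E) = 0 ↔ volume (E ∩ Ioo (0:ℝ) 1) = 0) := by
  haveI : Nonempty (Fin d) := ⟨⟨0, Nat.pos_of_ne_zero hd⟩⟩
  obtain ⟨m, hmf, hm1, hm2⟩ := exists_isFiniteMeasure_absolutelyContinuous (volume.restrict T)
  have hmuniv : m univ ≠ 0 := by
    intro h0
    have h1 : (volume.restrict T) univ = 0 := hm1 h0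
    rw [Measure.restrict_apply_univ] at h1
    exact hT0 h1
  set c := (m univ)⁻¹ with hc
  have hc0 : c ≠ 0 := ENNReal.inv_ne_zero.mpr (measure_ne_top m univ)
  set p' := c • m with hp'
  haveI : IsProbabilityMeasure p' :=
    ⟨by rw [hp', Measure.smul_apply, smul_eq_mul, hc,
        ENNReal.inv_mul_cancel hmuniv (measure_ne_top m univ)]⟩
  have hp'null : ∀ X : Set (Fin d → ℝ), p' X = 0 ↔ volume (T ∩ X) = 0 := by
    intro X
    rw [hp', Measure.smul_apply, smul_eq_mul, mul_eq_zero]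
    have h1 : m X = 0 ↔ (volume.restrict T) X = 0 :=
      ⟨fun h => hm1 h, fun h => hm2 h⟩
    rw [Measure.restrict_apply' hT, inter_comm] at h1
    simp only [hc0, false_or]
    exact h1
  -- Borel isomorphism with ℝ
  have hnc : ¬ Countable (Fin d → ℝ) := by
    intro hcnt
    have hinj : Function.Injective (fun (r : ℝ) => (fun (_ : Fin d) => r)) := by
      intro a b hab
      exact congrFun hab ⟨0, Nat.pos_of_ne_zero hd⟩
    haveI := hinj.countable
    exact not_countable (α := ℝ) inferInstance
  let e : (Fin d → ℝ) ≃ᵐ ℝ := PolishSpace.measurableEquivOfNotCountable hnc not_countable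
  set p := p'.map e with hpdef
  haveI : IsProbabilityMeasure p := Measure.isProbabilityMeasure_map e.measurable.aemeasurable
  haveI : NullSingletonClass p := by
    constructor
    intro y
    rw [hpdef, Measure.map_apply e.measurable (measurableSet_singleton y)]
    rw [hp'null]
    refine measure_mono_null (inter_subset_right) ?_
    have : (⇑e) ⁻¹' {y} = {e.symm y} := by
      ext z
      simp only [mem_preimage, mem_singleton_iff]
      exact ⟨fun h => by rw [← h]; exact (e.symm_apply_apply z).symm,
             fun h => by rw [h]; exact e.apply_symm_apply y⟩
    rw [this]
    exact measure_singleton _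
  set F := cdf p with hFdef
  have hFm : Measurable F := (cdf p).mono.measurable
  have hmap : p.map F = volume.restrict (Ioc (0:ℝ) 1) := map_cdf p
  -- pushforward identities
  have hpush : ∀ C : Set ℝ, MeasurableSet C →
      p' ((F ∘ ⇑e) ⁻¹' C) = volume (C ∩ Ioc (0:ℝ) 1) := by
    intro C hC
    have h1 : (F ∘ ⇑e) ⁻¹' C = (⇑e) ⁻¹' (F ⁻¹' C) := rfl
    rw [h1, ← Measure.map_apply e.measurable (hFm hC), ← hpdef,
      ← Measure.map_apply hFm hC, hmap, Measure.restrict_apply hC]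
  -- bad set
  set B := (F ∘ ⇑e) ⁻¹' (Ioo (0:ℝ) 1)ᶜ with hB
  have hBnull : p' B = 0 := by
    rw [hB, hpush _ measurableSet_Ioo.compl]
    have : (Ioo (0:ℝ) 1)ᶜ ∩ Ioc (0:ℝ) 1 = {1} := by
      ext z
      simp only [mem_inter_iff, mem_compl_iff, mem_Ioo, mem_Ioc, mem_singleton_iff, not_and,
        not_lt]
      constructor
      · rintro ⟨hz1, hz2, hz3⟩; linarith [hz1 hz2]
      · rintro rfl; exact ⟨fun _ => le_refl 1, by norm_num, le_refl 1⟩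
    rw [this]
    exact measure_singleton _
  refine ⟨fun x => if F (e x) ∈ Ioo (0:ℝ) 1 then F (e x) else 1/2, ?_, ?_, ?_⟩
  · refine Measurable.ite ?_ (hFm.comp e.measurable) measurable_const
    exact (hFm.comp e.measurable) measurableSet_Ioo
  · intro x
    by_cases hx : F (e x) ∈ Ioo (0:ℝ) 1
    · simpa [hx] using hx
    · simp only [hx, if_false]; norm_num
  · intro E hE
    set g := fun x => if F (e x) ∈ Ioo (0:ℝ) 1 then F (e x) else 1/2 with hg
    rw [← hp'null]
    have hagree : ∀ x, x ∉ B → g x = F (e x) := by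
      intro x hx
      rw [hB, mem_preimage, mem_compl_iff, not_not] at hx
      have hx' : F (e x) ∈ Ioo (0:ℝ) 1 := hx
      simp only [hg, if_pos hx']
    have hsub1 : g ⁻¹' E ⊆ ((F ∘ ⇑e) ⁻¹' E) ∪ B := by
      intro x hx
      by_cases hxB : x ∈ B
      · exact Or.inr hxB
      · exact Or.inl (by rw [mem_preimage, comp_apply, ← hagree x hxB]; exact hx)
    have hsub2 : (F ∘ ⇑e) ⁻¹' E ⊆ (g ⁻¹' E) ∪ B := by
      intro x hx
      by_cases hxB : x ∈ B
      · exact Or.inr hxB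
      · exact Or.inl (by rw [mem_preimage, hagree x hxB]; exact hx)
    have key : p' (g ⁻¹' E) = 0 ↔ p' ((F ∘ ⇑e) ⁻¹' E) = 0 := by
      constructor
      · intro h0
        refine measure_mono_null hsub2 ?_
        exact measure_union_null h0 hBnull
      · intro h0
        refine measure_mono_null hsub1 ?_
        exact measure_union_null h0 hBnull
    rw [key, hpush E hE]
    constructor
    · intro h0
      exact measure_mono_null (inter_subset_inter_right E Ioo_subset_Ioc_self) h0
    · intro h0
      have hsub : E ∩ Ioc (0:ℝ) 1 ⊆ (E ∩ Ioo (0:ℝ) 1) ∪ {1} := by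
        rintro z ⟨hzE, hz0, hz1⟩
        rcases lt_or_eq_of_le hz1 with h | h
        · exact Or.inl ⟨hzE, hz0, h⟩
        · exact Or.inr (by simp [h])
      refine measure_mono_null hsub ?_
      exact measure_union_null h0 (measure_singleton _)

lemma erealIoo_coe (a b : ℝ) : erealIoo (a : EReal) (b : EReal) = Ioo a b := by
  ext x
  simp only [erealIoo, mem_setOf_eq, mem_Ioo, EReal.coe_lt_coe_iff]


lemma testFun_mk {d : ℕ} {S : Set (Fin d → ℝ)} [∀ j : Fin d → ℝ, Decidable (j ∈ S)]
    (hS : MeasurableSet S)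
    {g₁ g₀ : (Fin d → ℝ) → ℝ} (hg₁m : Measurable g₁) (hg₀m : Measurable g₀)
    (hg₁r : ∀ x, g₁ x ∈ Ioo (0:ℝ) 1) (hg₀r : ∀ x, g₀ x ∈ Ioo (0:ℝ) 1)
    (h₁ : ∀ E : Set ℝ, MeasurableSet E →
      (volume (S ∩ g₁ ⁻¹' E) = 0 ↔ volume (E ∩ Ioo (0:ℝ) 1) = 0))
    (h₀ : ∀ E : Set ℝ, MeasurableSet E →
      (volume (Sᶜ ∩ g₀ ⁻¹' E) = 0 ↔ volume (E ∩ Ioo (0:ℝ) 1) = 0)) :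
    testFun (S.piecewise (fun x => 1 + g₁ x) g₀) := by
  set f := S.piecewise (fun x => 1 + g₁ x) g₀ with hf
  have hfm : Measurable f := Measurable.piecewise hS (measurable_const.add hg₁m) hg₀m
  have hrange : ∀ x, f x ∈ Ioo (0:ℝ) 2 := by
    intro x
    by_cases hx : x ∈ S
    · rw [hf, Set.piecewise_eq_of_mem _ _ _ hx]
      obtain ⟨h1, h2⟩ := hg₁r x
      constructor <;> [linarith; linarith]
    · rw [hf, Set.piecewise_eq_of_notMem _ _ _ hx]
      obtain ⟨h1, h2⟩ := hg₀r x
      constructor <;> [linarith; linarith]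
  refine ⟨hfm, ((0:ℝ) : EReal), ((2:ℝ) : EReal), ?_, ?_, ?_⟩
  · exact EReal.coe_lt_coe_iff.mpr (by norm_num)
  · intro x
    exact ⟨EReal.coe_lt_coe_iff.mpr (hrange x).1, EReal.coe_lt_coe_iff.mpr (hrange x).2⟩
  · intro ρ hρp hρr
    have hρnull : ∀ X : Set (Fin d → ℝ), ρ X = 0 ↔ volume X = 0 :=
      fun X => ⟨fun h => hρr.2 h, fun h => hρr.1 h⟩
    -- central claim
    have claim : ∀ E : Set ℝ, MeasurableSet E →
        ((ρ.map f) E = 0 ↔ volume (E ∩ Ioo (0:ℝ) 2) = 0) := by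
      intro E hE
      rw [Measure.map_apply hfm hE]
      have hpre : f ⁻¹' E = (S ∩ (fun x => 1 + g₁ x) ⁻¹' E) ∪ (Sᶜ ∩ g₀ ⁻¹' E) := by
        ext x
        by_cases hx : x ∈ S <;>
          simp [hf, Set.piecewise, hx]
      rw [hpre, hρnull, measure_union_null_iff]
      set E₁ : Set ℝ := (fun y => 1 + y) ⁻¹' E with hE₁
      have hE₁m : MeasurableSet E₁ := (measurable_const.add measurable_id) hE
      have hcomp : (fun x => 1 + g₁ x) ⁻¹' E = g₁ ⁻¹' E₁ := rfl
      rw [hcomp, h₁ E₁ hE₁m, h₀ E hE]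
      have htrans : E₁ ∩ Ioo (0:ℝ) 1 = (fun y => (1:ℝ) + y) ⁻¹' (E ∩ Ioo 1 2) := by
        ext y
        simp only [hE₁, mem_inter_iff, mem_preimage, mem_Ioo]
        constructor
        · rintro ⟨h1, h2, h3⟩; exact ⟨h1, by linarith, by linarith⟩
        · rintro ⟨h1, h2, h3⟩; exact ⟨h1, by linarith, by linarith⟩
      have hvol : volume (E₁ ∩ Ioo (0:ℝ) 1) = volume (E ∩ Ioo (1:ℝ) 2) := by
        rw [htrans, measure_preimage_add]
      rw [hvol]
      constructor
      · rintro ⟨h12, h01⟩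
        have hsub : E ∩ Ioo (0:ℝ) 2 ⊆ (E ∩ Ioo (0:ℝ) 1) ∪ ((E ∩ Ioo (1:ℝ) 2) ∪ {1}) := by
          rintro z ⟨hzE, hz0, hz2⟩
          rcases lt_trichotomy z 1 with h | h | h
          · exact Or.inl ⟨hzE, hz0, h⟩
          · exact Or.inr (Or.inr (by simp [h]))
          · exact Or.inr (Or.inl ⟨hzE, h, hz2⟩)
        exact measure_mono_null hsub
          (measure_union_null h01 (measure_union_null h12 (measure_singleton _)))
      · intro h02
        constructor
        · refine measure_mono_null ?_ h02
          exact inter_subset_inter_right E (Ioo_subset_Ioo (by norm_num) (le_refl 2))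
        · refine measure_mono_null ?_ h02
          exact inter_subset_inter_right E (Ioo_subset_Ioo (le_refl 0) (by norm_num))
    refine ⟨?_, ?_, ?_⟩
    · rw [erealIoo_coe]
      rw [Measure.map_apply hfm measurableSet_Ioo.compl]
      have : f ⁻¹' (Ioo (0:ℝ) 2)ᶜ = ∅ := by
        ext x
        simp only [mem_preimage, mem_compl_iff, mem_empty_iff_false, iff_false, not_not]
        exact hrange x
      rw [this]; exact measure_empty
    · rw [erealIoo_coe]
      refine Measure.AbsolutelyContinuous.mk (fun s hs h0 => ?_)
      rw [Measure.restrict_apply hs] at h0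
      exact (claim s hs).mpr h0
    · rw [erealIoo_coe]
      refine Measure.AbsolutelyContinuous.mk (fun s hs h0 => ?_)
      rw [Measure.restrict_apply hs]
      exact (claim s hs).mp h0

/-- If μ, ν are regular probability measures on ℝ^d and, for independent θ ~ μ, ϑ ~ ν,
we have P(f(θ) ≤ f(ϑ)) = 1/2 for every test function f ∈ F_d, then μ = ν. -/
theorem stmt_6 {d : ℕ} (μ ν : Measure (Fin d → ℝ))
    [IsProbabilityMeasure μ] [IsProbabilityMeasure ν]
    (hμ : regular μ) (hν : regular ν)
    (h : ∀ f : (Fin d → ℝ) → ℝ, testFun f →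
      (μ.prod ν) {p : (Fin d → ℝ) × (Fin d → ℝ) | f p.1 ≤ f p.2} = 1/2) :
    μ = ν := by
  classical
  refine Measure.ext (fun S hS => ?_)
  rcases eq_or_ne (volume S) 0 with hS0 | hS0
  · rw [hμ.1 hS0, hν.1 hS0]
  rcases eq_or_ne (volume Sᶜ) 0 with hSc0 | hSc0
  · have h1 : μ Sᶜ = 0 := hμ.1 hSc0
    have h2 : ν Sᶜ = 0 := hν.1 hSc0
    have e1 := measure_add_measure_compl (μ := μ) hS
    have e2 := measure_add_measure_compl (μ := ν) hS
    rw [h1, add_zero, measure_univ] at e1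
    rw [h2, add_zero, measure_univ] at e2
    rw [e1, e2]
  -- d ≠ 0
  have hd : d ≠ 0 := by
    rintro rfl
    rcases eq_empty_or_nonempty S with rfl | ⟨x, hx⟩
    · exact hS0 measure_empty
    · have : S = univ := eq_univ_of_forall (fun y => by rwa [Subsingleton.elim y x])
      rw [this, compl_univ] at hSc0
      exact hSc0 measure_empty
  obtain ⟨g₁, hg₁m, hg₁r, hg₁⟩ := lemA hd hS hS0
  obtain ⟨g₀, hg₀m, hg₀r, hg₀⟩ := lemA hd hS.compl hSc0
  have hg₁' : ∀ E : Set ℝ, MeasurableSet E →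
      (volume (Sᶜᶜ ∩ g₁ ⁻¹' E) = 0 ↔ volume (E ∩ Ioo (0:ℝ) 1) = 0) := by
    intro E hE; rw [compl_compl]; exact hg₁ E hE
  have hf₁ := testFun_mk hS hg₁m hg₀m hg₁r hg₀r hg₁ hg₀
  have hf₂ := testFun_mk hS.compl hg₀m hg₁m hg₀r hg₁r hg₀ hg₁'
  set f₁ := S.piecewise (fun x => 1 + g₁ x) g₀ with hf₁def
  set f₂ := Sᶜ.piecewise (fun x => 1 + g₀ x) g₁ with hf₂def
  have e₁ := h f₁ hf₁
  have e₂ := h f₂ hf₂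
  -- decompose events
  set A2 : Set ((Fin d → ℝ) × (Fin d → ℝ)) :=
    {p | p.1 ∈ S ∧ p.2 ∈ S ∧ g₁ p.1 ≤ g₁ p.2} with hA2
  set A3 : Set ((Fin d → ℝ) × (Fin d → ℝ)) :=
    {p | p.1 ∈ Sᶜ ∧ p.2 ∈ Sᶜ ∧ g₀ p.1 ≤ g₀ p.2} with hA3
  have hA2m : MeasurableSet A2 := by
    refine MeasurableSet.inter (hS.preimage measurable_fst) ?_
    exact MeasurableSet.inter (hS.preimage measurable_snd)
      (measurableSet_le (hg₁m.comp measurable_fst) (hg₁m.comp measurable_snd))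
  have hA3m : MeasurableSet A3 := by
    refine MeasurableSet.inter (hS.compl.preimage measurable_fst) ?_
    exact MeasurableSet.inter (hS.compl.preimage measurable_snd)
      (measurableSet_le (hg₀m.comp measurable_fst) (hg₀m.comp measurable_snd))
  have hW₁ : {p : (Fin d → ℝ) × (Fin d → ℝ) | f₁ p.1 ≤ f₁ p.2}
      = (Sᶜ ×ˢ S) ∪ (A2 ∪ A3) := by
    ext ⟨x, y⟩
    simp only [mem_setOf_eq, mem_union, mem_prod, mem_compl_iff, hA2, hA3]
    by_cases hx : x ∈ S <;> by_cases hy : y ∈ S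
    · rw [hf₁def, Set.piecewise_eq_of_mem _ _ _ hx, Set.piecewise_eq_of_mem _ _ _ hy]
      constructor
      · intro h'; exact Or.inr (Or.inl ⟨hx, hy, by linarith⟩)
      · rintro (⟨h', -⟩ | ⟨-, -, h'⟩ | ⟨h', -⟩)
        · exact absurd hx h'
        · linarith
        · exact absurd hx h'
    · rw [hf₁def, Set.piecewise_eq_of_mem _ _ _ hx, Set.piecewise_eq_of_notMem _ _ _ hy]
      have h1 := (hg₁r x).1
      have h2 := (hg₀r y).2
      constructor
      · intro h'; linarith
      · rintro (⟨h', -⟩ | ⟨-, h', -⟩ | ⟨h', -⟩)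
        · exact absurd hx h'
        · exact absurd h' hy
        · exact absurd hx h'
    · rw [hf₁def, Set.piecewise_eq_of_notMem _ _ _ hx, Set.piecewise_eq_of_mem _ _ _ hy]
      constructor
      · intro _; exact Or.inl ⟨hx, hy⟩
      · intro _
        have h1 := (hg₀r x).2
        have h2 := (hg₁r y).1
        linarith
    · rw [hf₁def, Set.piecewise_eq_of_notMem _ _ _ hx, Set.piecewise_eq_of_notMem _ _ _ hy]
      constructor
      · intro h'; exact Or.inr (Or.inr ⟨hx, hy, h'⟩)
      · rintro (⟨-, h'⟩ | ⟨h', -⟩ | ⟨-, -, h'⟩)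
        · exact absurd h' hy
        · exact absurd h' hx
        · exact h'
  have hW₂ : {p : (Fin d → ℝ) × (Fin d → ℝ) | f₂ p.1 ≤ f₂ p.2}
      = (S ×ˢ Sᶜ) ∪ (A2 ∪ A3) := by
    ext ⟨x, y⟩
    simp only [mem_setOf_eq, mem_union, mem_prod, mem_compl_iff, hA2, hA3]
    by_cases hx : x ∈ S <;> by_cases hy : y ∈ S
    · rw [hf₂def, Set.piecewise_eq_of_notMem _ _ _ (by simpa using hx),
        Set.piecewise_eq_of_notMem _ _ _ (by simpa using hy)]
      constructor
      · intro h'; exact Or.inr (Or.inl ⟨hx, hy, h'⟩)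
      · rintro (⟨-, h'⟩ | ⟨-, -, h'⟩ | ⟨h', -⟩)
        · exact absurd hy h'
        · exact h'
        · exact absurd hx h'
    · rw [hf₂def, Set.piecewise_eq_of_notMem _ _ _ (by simpa using hx),
        Set.piecewise_eq_of_mem _ _ _ (by simpa using hy)]
      constructor
      · intro _; exact Or.inl ⟨hx, hy⟩
      · intro _
        have h1 := (hg₁r x).2
        have h2 := (hg₀r y).1
        linarith
    · rw [hf₂def, Set.piecewise_eq_of_mem _ _ _ (by simpa using hx),
        Set.piecewise_eq_of_notMem _ _ _ (by simpa using hy)]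
      have h1 := (hg₀r x).1
      have h2 := (hg₁r y).2
      constructor
      · intro h'; linarith
      · rintro (⟨-, h'⟩ | ⟨h', -⟩ | ⟨-, h', -⟩)
        · exact absurd hy h'
        · exact absurd h' hx
        · exact absurd hy h'
    · rw [hf₂def, Set.piecewise_eq_of_mem _ _ _ (by simpa using hx),
        Set.piecewise_eq_of_mem _ _ _ (by simpa using hy)]
      constructor
      · intro h'; exact Or.inr (Or.inr ⟨hx, hy, by linarith⟩)
      · rintro (⟨h', -⟩ | ⟨h', -⟩ | ⟨-, -, h'⟩)
        · exact absurd h' hx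
        · exact absurd h' hx
        · linarith
  -- additivity
  have hdisj₁ : Disjoint (Sᶜ ×ˢ S) (A2 ∪ A3) := by
    rw [Set.disjoint_left]
    rintro ⟨x, y⟩ ⟨hx, hy⟩ (⟨hx2, -⟩ | ⟨-, hy3, -⟩)
    · exact hx hx2
    · exact hy3 hy
  have hdisj₂ : Disjoint (S ×ˢ Sᶜ) (A2 ∪ A3) := by
    rw [Set.disjoint_left]
    rintro ⟨x, y⟩ ⟨hx, hy⟩ (⟨-, hy2, -⟩ | ⟨hx3, -⟩)
    · exact hy hy2
    · exact hx3 hx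
  have hdisj₃ : Disjoint A2 A3 := by
    rw [Set.disjoint_left]
    rintro ⟨x, y⟩ ⟨hx, -, -⟩ ⟨hx3, -⟩
    exact hx3 hx
  rw [hW₁] at e₁
  rw [hW₂] at e₂
  rw [measure_union hdisj₁ (hA2m.union hA3m), measure_union hdisj₃ hA3m] at e₁
  rw [measure_union hdisj₂ (hA2m.union hA3m), measure_union hdisj₃ hA3m] at e₂
  have hkey : (μ.prod ν) (Sᶜ ×ˢ S) = (μ.prod ν) (S ×ˢ Sᶜ) := by
    have hfin : (μ.prod ν) A2 + (μ.prod ν) A3 ≠ ⊤ :=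
      ne_top_of_le_ne_top (by norm_num)
        (le_trans (le_add_self.trans e₁.le) (le_refl _))
    refine (ENNReal.add_left_inj hfin).mp ?_
    rw [e₁, e₂]
  rw [Measure.prod_prod, Measure.prod_prod] at hkey
  have hμc : μ Sᶜ = 1 - μ S := by
    have := measure_add_measure_compl (μ := μ) hS
    rw [measure_univ] at this
    rw [← this, ENNReal.add_sub_cancel_left (measure_ne_top μ S)]
  have hνc : ν Sᶜ = 1 - ν S := by
    have := measure_add_measure_compl (μ := ν) hS
    rw [measure_univ] at this
    rw [← this, ENNReal.add_sub_cancel_left (measure_ne_top ν S)]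
  rw [hμc, hνc] at hkey
  have hkeyR := congrArg ENNReal.toReal hkey
  rw [ENNReal.toReal_mul, ENNReal.toReal_mul,
    ENNReal.toReal_sub_of_le prob_le_one ENNReal.one_ne_top,
    ENNReal.toReal_sub_of_le prob_le_one ENNReal.one_ne_top, ENNReal.toReal_one] at hkeyR
  refine (ENNReal.toReal_eq_toReal_iff' (measure_ne_top μ S) (measure_ne_top ν S)).mp ?_
  linear_combination -hkeyR
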